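/- Let φ : ℝ² → [0,∞) be a norm and let X ∈ ℝ² with φ(X) = 1. Assume that every segment contained in the unit sphere of φ and parallel to X has Euclidean length at most |X|; precisely, assume that for all p ∈ ℝ² and t ∈ ℝ such that φ(p + s t X) = 1 for all s ∈ [0,1], one has |t| ≤ 1. Then the unordered pair {Y, Z} with φ(Y) = φ(Z) = 1 and X + Y + Z = 0 is unique: if (X, Y, Z) and (X, Y', Z') are both admissible triplets, then {Y, Z} = {Y', Z'}. -/

import Mathlib

noncomputable section
open Set

abbrev E2 : Type := EuclideanSpace ℝ (Fin 2)

/-- General uniqueness statement of Lemma 4.11 of the paper: if no segment of the unit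
sphere of the norm `φ` parallel to `X` is (Euclidean-)longer than `X`, then the
unordered pair completing `X` to an admissible triplet is unique. -/
theorem admissible_triplet_unique_of_short_facets
    (φ : E2 → ℝ)
    (hφ_triangle : ∀ x y : E2, φ (x + y) ≤ φ x + φ y)
    (hφ_hom : ∀ (c : ℝ) (x : E2), φ (c • x) = |c| * φ x)
    (hφ_pos : ∀ x : E2, φ x = 0 → x = 0)
    (X : E2) (hX : φ X = 1)
    (hshort : ∀ (p : E2) (t : ℝ),
      (∀ s ∈ Set.Icc (0:ℝ) 1, φ (p + (s * t) • X) = 1) → |t| ≤ 1) :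
    ∀ Y Z Y' Z' : E2,
      φ Y = 1 → φ Z = 1 → X + Y + Z = 0 →
      φ Y' = 1 → φ Z' = 1 → X + Y' + Z' = 0 →
      (Y = Y' ∧ Z = Z') ∨ (Y = Z' ∧ Z = Y') := by
  -- basic facts about the norm φ
  have hφ_even : ∀ x : E2, φ (-x) = φ x := by
    intro x
    have h := hφ_hom (-1) x
    simpa using h
  have hcombo : ∀ (s t : ℝ) (x y : E2), 0 ≤ s → 0 ≤ t →
      φ (s • x + t • y) ≤ s * φ x + t * φ y := by
    intro s t x y hs ht
    calc φ (s • x + t • y) ≤ φ (s • x) + φ (t • y) := hφ_triangle _ _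
      _ = s * φ x + t * φ y := by
          rw [hφ_hom, hφ_hom, abs_of_nonneg hs, abs_of_nonneg ht]
  have hlow : ∀ (μ : ℝ) (p q : E2), 0 < μ → μ ≤ 1 → φ q ≤ 1 →
      φ (μ • p + (1 - μ) • q) = 1 → 1 ≤ φ p := by
    intro μ p q hμ hμ1 hq hc
    have h := hcombo μ (1 - μ) p q hμ.le (by linarith)
    rw [hc] at h
    nlinarith
  -- key lemma: a segment of the sphere parallel to X, with both prolonged endpoints
  -- inside the ball, has length at most |X|.
  have key : ∀ (a : E2) (T u : ℝ), φ a ≤ 1 → φ (a + T • X) ≤ 1 → 0 < u → u < 1 →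
      φ (a + (u * T) • X) = 1 → |T| ≤ 1 := by
    intro a T u ha hb hu hu1 hc
    apply hshort a T
    intro s hs
    obtain ⟨hs0, hs1⟩ := hs
    have hup : φ (a + (s * T) • X) ≤ 1 := by
      have h := hcombo (1 - s) s a (a + T • X) (by linarith) hs0
      have e : (1 - s) • a + s • (a + T • X) = a + (s * T) • X := by module
      rw [e] at h
      nlinarith
    have hlo : 1 ≤ φ (a + (s * T) • X) := by
      rcases le_or_gt s u with h | h
      · set μ := (1 - u) / (1 - s) with hμdef
        have h1s : 0 < 1 - s := by linarith
        have hμpos : 0 < μ := div_pos (by linarith) h1s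
        have hμle : μ ≤ 1 := by rw [hμdef, div_le_one h1s]; linarith
        apply hlow μ (a + (s * T) • X) (a + T • X) hμpos hμle hb
        have hμs : μ * (1 - s) = 1 - u := by
          rw [hμdef]; field_simp
        have e : μ • (a + (s * T) • X) + (1 - μ) • (a + T • X)
            = a + ((1 - μ * (1 - s)) * T) • X := by module
        rw [e, hμs]
        convert hc using 4
        ring
      · set μ := u / s with hμdef
        have hspos : 0 < s := lt_trans hu h
        have hμpos : 0 < μ := div_pos hu hspos
        have hμle : μ ≤ 1 := by rw [hμdef, div_le_one hspos]; linarith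
        apply hlow μ (a + (s * T) • X) a hμpos hμle ha
        have hμs : μ * s = u := by rw [hμdef]; field_simp
        have e : μ • (a + (s * T) • X) + (1 - μ) • a = a + ((μ * s) * T) • X := by
          module
        rw [e, hμs]
        exact hc
    linarith
  -- two points of the sphere on the same line parallel to X, both of whose
  -- X-translates are also on the sphere, coincide.
  have same : ∀ (A : E2) (t : ℝ), φ A = 1 → φ (A + X) = 1 →
      φ (A + t • X) = 1 → φ (A + t • X + X) = 1 → t = 0 := by
    have base : ∀ (A : E2) (t : ℝ), 0 < t → φ A = 1 → φ (A + X) = 1 →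
        φ (A + t • X + X) = 1 → False := by
      intro A t ht hA hAX hBX
      have h1 : |t + 1| ≤ 1 := by
        apply key A (t + 1) (1 / (t + 1)) hA.le
        · have e : A + (t + 1) • X = A + t • X + X := by module
          rw [e]; exact hBX.le
        · positivity
        · rw [div_lt_one (by linarith)]; linarith
        · have e : A + (1 / (t + 1) * (t + 1)) • X = A + X := by
            rw [div_mul_cancel₀ _ (by linarith : t + 1 ≠ 0)]
            module
          rw [e]; exact hAX
      rw [abs_of_pos (by linarith)] at h1
      linarith
    intro A t hA hAX hB hBX
    by_contra ht
    rcases lt_or_gt_of_ne ht with h | h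
    · -- t < 0 : apply base with A' = A + t•X and t' = -t
      apply base (A + t • X) (-t) (by linarith) hB hBX
      have e : A + t • X + (-t) • X + X = A + X := by module
      rw [e]; exact hAX
    · exact base A t h hA hAX hBX
  -- the "height" functional, vanishing on X
  set ψ : E2 → ℝ := fun v => v 0 * X 1 - v 1 * X 0 with hψdef
  have hX0 : φ (0 : E2) = 0 := by
    have h := hφ_hom 0 0
    simpa using h
  have hXne : X ≠ 0 := by
    intro h
    rw [h, hX0] at hX
    norm_num at hX
  have line : ∀ v w : E2, ψ v = ψ w → ∃ t : ℝ, w = v + t • X := by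
    intro v w h
    have hd : (w 0 - v 0) * X 1 = (w 1 - v 1) * X 0 := by
      simp only [hψdef] at h
      ring_nf
      ring_nf at h
      linarith
    have hXc : X 0 ≠ 0 ∨ X 1 ≠ 0 := by
      by_contra hcon
      push_neg at hcon
      apply hXne
      ext i
      fin_cases i
      · exact hcon.1
      · exact hcon.2
    rcases hXc with h0 | h1
    · refine ⟨(w 0 - v 0) / X 0, ?_⟩
      ext i
      fin_cases i
      · show w 0 = v 0 + (w 0 - v 0) / X 0 * X 0
        field_simp
        ring
      · show w 1 = v 1 + (w 0 - v 0) / X 0 * X 1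
        rw [div_mul_eq_mul_div, hd, mul_div_assoc, div_self h0]
        ring
    · refine ⟨(w 1 - v 1) / X 1, ?_⟩
      ext i
      fin_cases i
      · show w 0 = v 0 + (w 1 - v 1) / X 1 * X 0
        rw [div_mul_eq_mul_div, ← hd, mul_div_assoc, div_self h1]
        ring
      · show w 1 = v 1 + (w 1 - v 1) / X 1 * X 1
        field_simp
        ring
  -- no two "chord starting points" at distinct nonnegative heights
  have diff : ∀ A B : E2, φ A = 1 → φ (A + X) = 1 → φ B = 1 → φ (B + X) = 1 →
      0 ≤ ψ A → ψ A < ψ B → False := by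
    intro A B hA hAX hB hBX hA0 hAB
    have hBpos : 0 < ψ B := lt_of_le_of_lt hA0 hAB
    set l := ψ A / ψ B with hl
    have hl0 : 0 ≤ l := div_nonneg hA0 hBpos.le
    have hl1 : l < 1 := (div_lt_one hBpos).mpr hAB
    set a : E2 := l • B + (l - 1) • X with ha
    have hφa : φ a ≤ 1 := by
      have h := hcombo l (1 - l) B (-X) hl0 (by linarith)
      rw [hφ_even] at h
      have e : l • B + (1 - l) • (-X) = a := by rw [ha]; module
      rw [e] at h
      nlinarith
    have hφb : φ (a + (2 - l) • X) ≤ 1 := by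
      have h := hcombo l (1 - l) (B + X) X hl0 (by linarith)
      have e : l • (B + X) + (1 - l) • X = a + (2 - l) • X := by rw [ha]; module
      rw [e] at h
      nlinarith
    have hline : ψ a = ψ A := by
      have hψB : ψ B ≠ 0 := hBpos.ne'
      have hψB' : X 1 * B 0 - X 0 * B 1 ≠ 0 := by
        intro h0; apply hψB; simp only [hψdef]; linarith
      simp only [ha, hψdef, hl, PiLp.add_apply, PiLp.smul_apply, smul_eq_mul]
      field_simp
      ring
    obtain ⟨r, hr⟩ := line a A hline
    rcases le_or_gt r 0 with hr0 | hr0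
    · -- the segment goes from A to a + (2-l)•X, interior point A + X
      have hT : (1 : ℝ) < 2 - l - r := by linarith
      have h1 : |2 - l - r| ≤ 1 := by
        apply key A (2 - l - r) (1 / (2 - l - r)) hA.le
        · have e : A + (2 - l - r) • X = a + (2 - l) • X := by rw [hr]; module
          rw [e]; exact hφb
        · positivity
        · rw [div_lt_one (by linarith)]; linarith
        · have e : A + (1 / (2 - l - r) * (2 - l - r)) • X = A + X := by
            rw [div_mul_cancel₀ _ (by linarith : (2 : ℝ) - l - r ≠ 0)]
            module
          rw [e]; exact hAX
      rw [abs_of_pos (by linarith)] at h1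
      linarith
    · -- the segment goes from a to a + T•X with T = max (2-l) (r+1), interior point A
      set T := max (2 - l) (r + 1) with hTdef
      have hT1 : (1 : ℝ) < T := lt_of_lt_of_le (by linarith) (le_max_left _ _)
      have hrT : r < T := lt_of_lt_of_le (by linarith) (le_max_right _ _)
      have h1 : |T| ≤ 1 := by
        apply key a T (r / T) hφa
        · rcases le_total (r + 1) (2 - l) with hm | hm
          · rw [hTdef, max_eq_left hm]; exact hφb
          · rw [hTdef, max_eq_right hm]
            have e : a + (r + 1) • X = A + X := by rw [hr]; module
            rw [e]; exact hAX.le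
        · exact div_pos hr0 (by linarith)
        · rw [div_lt_one (by linarith)]; exact hrT
        · have e : a + (r / T * T) • X = A := by
            rw [div_mul_cancel₀ _ (by linarith : T ≠ 0), hr]
          rw [e]; exact hA
      rw [abs_of_pos (by linarith)] at h1
      linarith
  -- basic computations with ψ
  have hψX : ψ X = 0 := by simp only [hψdef]; ring
  have hψZ : ∀ v : E2, ψ (-(X + v)) = -ψ v := by
    intro v
    simp only [hψdef, PiLp.neg_apply, PiLp.add_apply]
    ring
  -- now the main argument
  intro Y Z Y' Z' hY hZ hsum hY' hZ' hsum'
  have hZeq : Z = -(X + Y) := eq_neg_of_add_eq_zero_right hsum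
  have hZ'eq : Z' = -(X + Y') := eq_neg_of_add_eq_zero_right hsum'
  subst hZeq hZ'eq
  -- solution properties
  have hYX : φ (Y + X) = 1 := by
    rw [add_comm, ← hφ_even]; exact hZ
  have hY'X : φ (Y' + X) = 1 := by
    rw [add_comm, ← hφ_even]; exact hZ'
  have hZX : φ (-(X + Y) + X) = 1 := by
    have e : -(X + Y) + X = -Y := by module
    rw [e, hφ_even]; exact hY
  have hZ'X : φ (-(X + Y') + X) = 1 := by
    have e : -(X + Y') + X = -Y' := by module
    rw [e, hφ_even]; exact hY'
  by_cases h1 : ψ Y' = ψ Y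
  · -- same line: Y = Y'
    obtain ⟨t, ht⟩ := line Y Y' h1.symm
    have ht0 : t = 0 := by
      apply same Y t hY hYX
      · rw [← ht]; exact hY'
      · rw [← ht]; exact hY'X
    left
    have hYY' : Y = Y' := by rw [ht, ht0]; module
    exact ⟨hYY', by rw [hYY']⟩
  by_cases h2 : ψ Y' = -ψ Y
  · -- Y' on the line of Z : Y' = Z
    have hψZY : ψ (-(X + Y)) = ψ Y' := by rw [hψZ, h2]
    obtain ⟨t, ht⟩ := line (-(X + Y)) Y' hψZY
    have ht0 : t = 0 := by
      apply same (-(X + Y)) t hZ hZX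
      · rw [← ht]; exact hY'
      · rw [← ht]; exact hY'X
    have hY'Z : Y' = -(X + Y) := by rw [ht, ht0]; module
    right
    constructor
    · rw [hY'Z]; module
    · exact hY'Z.symm
  -- distinct lines : contradiction via diff
  exfalso
  have pairdiff : ∀ A₁ A₂ B₁ B₂ : E2,
      φ A₁ = 1 → φ (A₁ + X) = 1 → φ A₂ = 1 → φ (A₂ + X) = 1 →
      φ B₁ = 1 → φ (B₁ + X) = 1 → φ B₂ = 1 → φ (B₂ + X) = 1 →
      ψ A₂ = -ψ A₁ → ψ B₂ = -ψ B₁ → |ψ A₁| < |ψ B₁| → False := by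
    intro A₁ A₂ B₁ B₂ hA1 hA1X hA2 hA2X hB1 hB1X hB2 hB2X hA21 hB21 hlt
    rcases le_or_gt 0 (ψ A₁) with hA | hA <;> rcases le_or_gt 0 (ψ B₁) with hB | hB
    · exact diff A₁ B₁ hA1 hA1X hB1 hB1X hA
        (by rw [abs_of_nonneg hA, abs_of_nonneg hB] at hlt; exact hlt)
    · refine diff A₁ B₂ hA1 hA1X hB2 hB2X hA ?_
      rw [hB21]
      rw [abs_of_nonneg hA, abs_of_neg hB] at hlt; linarith
    · refine diff A₂ B₁ hA2 hA2X hB1 hB1X (by rw [hA21]; linarith) ?_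
      rw [hA21]
      rw [abs_of_neg hA, abs_of_nonneg hB] at hlt; linarith
    · refine diff A₂ B₂ hA2 hA2X hB2 hB2X (by rw [hA21]; linarith) ?_
      rw [hA21, hB21]
      rw [abs_of_neg hA, abs_of_neg hB] at hlt; linarith
  have habs : |ψ Y| ≠ |ψ Y'| := by
    intro h
    rcases abs_eq_abs.mp h with h | h
    · exact h1 h.symm
    · exact h2 (by linarith)
  rcases habs.lt_or_gt with h | h
  · exact pairdiff Y (-(X + Y)) Y' (-(X + Y')) hY hYX hZ hZX hY' hY'X hZ' hZ'X
      (hψZ Y) (hψZ Y') h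
  · exact pairdiff Y' (-(X + Y')) Y (-(X + Y)) hY' hY'X hZ' hZ'X hY hYX hZ hZX
      (hψZ Y') (hψZ Y) h
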